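/- For an odd prime p, an integer r ≥ 1, and δ ∈ ℤ/p^rℤ with p | δ, the number of triples (A,B,C) ∈ (ℤ/p^rℤ)³ with p ∤ gcd(A,B,C) and B² − 4AC ≡ δ (mod p^r) equals p^{2r−2}(p²−1). -/

import Mathlib

theorem stmt_4 (p r : ℕ) (hp : p.Prime) (hodd : Odd p) (hr : 1 ≤ r)
    (δ : ZMod (p ^ r)) (hδ : (p : ZMod (p ^ r)) ∣ δ) :
    Nat.card {x : ZMod (p ^ r) × ZMod (p ^ r) × ZMod (p ^ r) //
        ¬ ((p : ZMod (p ^ r)) ∣ x.1 ∧ (p : ZMod (p ^ r)) ∣ x.2.1 ∧ (p : ZMod (p ^ r)) ∣ x.2.2)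
        ∧ x.2.1 ^ 2 - 4 * x.1 * x.2.2 = δ}
      = p ^ (2 * r - 2) * (p ^ 2 - 1) := by
  haveI : NeZero (p ^ r) := ⟨pow_ne_zero r hp.ne_zero⟩
  haveI : Fact (1 < p ^ r) := ⟨Nat.one_lt_pow (by omega) hp.one_lt⟩
  -- p is not a unit in ZMod (p^r)
  have hpnu : ¬ IsUnit (p : ZMod (p ^ r)) := by
    intro h
    have h0 : ((p : ZMod (p ^ r))) ^ r = 0 := by
      rw [← Nat.cast_pow, ZMod.natCast_self]
    exact not_isUnit_zero (h0 ▸ h.pow r)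
  have unit_iff : ∀ x : ZMod (p ^ r), IsUnit x ↔ ¬ (p : ZMod (p ^ r)) ∣ x := by
    intro x
    constructor
    · rintro hx ⟨y, rfl⟩
      exact hpnu (isUnit_of_mul_isUnit_left hx)
    · intro hx
      by_contra hu
      apply hx
      have hv : ((x.val : ℕ) : ZMod (p ^ r)) = x := ZMod.natCast_rightInverse x
      have hnc : ¬ Nat.Coprime x.val (p ^ r) := by
        intro hc
        exact hu (hv ▸ (ZMod.isUnit_iff_coprime x.val (p ^ r)).mpr hc)
      have hg : Nat.gcd x.val (p ^ r) ≠ 1 := hnc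
      obtain ⟨q, hq, hqd⟩ := Nat.exists_prime_and_dvd hg
      have hqp : q = p :=
        (Nat.prime_dvd_prime_iff_eq hq hp).mp (hq.dvd_of_dvd_pow (hqd.trans (Nat.gcd_dvd_right _ _)))
      rw [hqp] at hqd
      have hpx : p ∣ x.val := hqd.trans (Nat.gcd_dvd_left _ _)
      obtain ⟨m, hm⟩ := hpx
      refine ⟨(m : ZMod (p ^ r)), ?_⟩
      rw [← hv, hm]
      push_cast
      ring
  have hu4 : IsUnit (4 : ZMod (p ^ r)) := by
    have hc : Nat.Coprime 4 (p ^ r) := by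
      apply Nat.Coprime.pow_right
      have hnd : ¬ p ∣ 4 := by
        intro h
        have h4 : p ≤ 4 := Nat.le_of_dvd (by norm_num) h
        have h2 := hp.two_le
        interval_cases p
        · rcases hodd with ⟨k, hk⟩; omega
        · omega
        · exact absurd hp (by norm_num)
      exact Nat.coprime_comm.mp (hp.coprime_iff_not_dvd.mpr hnd)
    have := (ZMod.isUnit_iff_coprime 4 (p ^ r)).mpr hc
    simpa using this
  -- key solving lemma
  have key : ∀ a b c : ZMod (p ^ r), IsUnit a →
      (b ^ 2 - 4 * a * c = δ ↔ c = (b ^ 2 - δ) * Ring.inverse (4 * a)) := by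
    intro a b c ha
    have h4a : IsUnit (4 * a) := hu4.mul ha
    constructor
    · intro h
      have hbd : b ^ 2 - δ = 4 * a * c := by linear_combination h
      rw [hbd, mul_comm (4 * a) c, mul_assoc, Ring.mul_inverse_cancel _ h4a, mul_one]
    · rintro rfl
      have h1 : 4 * a * ((b ^ 2 - δ) * Ring.inverse (4 * a)) = b ^ 2 - δ := by
        rw [mul_comm (b ^ 2 - δ), ← mul_assoc, Ring.mul_inverse_cancel _ h4a, one_mul]
      rw [h1]; ring
  have hbδ : ∀ b : ZMod (p ^ r), IsUnit b → IsUnit (b ^ 2 - δ) := by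
    intro b hb
    refine (unit_iff _).mpr ?_
    intro hdvd
    have hb2 : (p : ZMod (p ^ r)) ∣ b ^ 2 := by
      have := dvd_add hdvd hδ
      simpa using this
    exact (unit_iff (b ^ 2)).mp (hb.pow 2) hb2
  -- the set equals the union of "A unit" and "C unit" parts
  set M := ZMod (p ^ r) × ZMod (p ^ r) × ZMod (p ^ r) with hM
  set SA : Set M := {x | IsUnit x.1 ∧ x.2.1 ^ 2 - 4 * x.1 * x.2.2 = δ} with hSA
  set SC : Set M := {x | IsUnit x.2.2 ∧ x.2.1 ^ 2 - 4 * x.1 * x.2.2 = δ} with hSC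
  have hset : {x : M | ¬ ((p : ZMod (p ^ r)) ∣ x.1 ∧ (p : ZMod (p ^ r)) ∣ x.2.1 ∧
      (p : ZMod (p ^ r)) ∣ x.2.2) ∧ x.2.1 ^ 2 - 4 * x.1 * x.2.2 = δ} = SA ∪ SC := by
    ext ⟨a, b, c⟩
    simp only [Set.mem_setOf_eq, Set.mem_union, hSA, hSC]
    constructor
    · rintro ⟨hnp, hd⟩
      by_contra hcon
      push_neg at hcon
      obtain ⟨h1, h2⟩ := hcon
      have ha : (p : ZMod (p ^ r)) ∣ a := by
        by_contra h; exact h1 ((unit_iff a).mpr h) hd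
      have hc : (p : ZMod (p ^ r)) ∣ c := by
        by_contra h; exact h2 ((unit_iff c).mpr h) hd
      have hb : (p : ZMod (p ^ r)) ∣ b := by
        by_contra h
        have hbu : IsUnit b := (unit_iff b).mpr h
        have hb2 : (p : ZMod (p ^ r)) ∣ b ^ 2 := by
          have hbe : b ^ 2 = δ + 4 * a * c := by linear_combination hd
          rw [hbe]
          exact dvd_add hδ ((ha.mul_left 4).mul_right c)
        exact (unit_iff (b ^ 2)).mp (hbu.pow 2) hb2
      exact hnp ⟨ha, hb, hc⟩
    · rintro (⟨ha, hd⟩ | ⟨hc, hd⟩)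
      · exact ⟨fun h => (unit_iff a).mp ha h.1, hd⟩
      · exact ⟨fun h => (unit_iff c).mp hc h.2.2, hd⟩
  -- cardinalities
  have eA : ↥SA ≃ {a : ZMod (p ^ r) // IsUnit a} × ZMod (p ^ r) :=
    { toFun := fun x => (⟨x.1.1, x.2.1⟩, x.1.2.1)
      invFun := fun y => ⟨(y.1.1, y.2, (y.2 ^ 2 - δ) * Ring.inverse (4 * y.1.1)),
        ⟨y.1.2, (key y.1.1 y.2 _ y.1.2).mpr rfl⟩⟩
      left_inv := by
        rintro ⟨⟨a, b, c⟩, ha, hd⟩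
        exact Subtype.ext (by
          simp only
          exact Prod.ext rfl (Prod.ext rfl ((key a b c ha).mp hd).symm))
      right_inv := by rintro ⟨⟨a, ha⟩, b⟩; rfl }
  have eC : ↥SC ≃ {a : ZMod (p ^ r) // IsUnit a} × ZMod (p ^ r) :=
    { toFun := fun x => (⟨x.1.2.2, x.2.1⟩, x.1.2.1)
      invFun := fun y => ⟨((y.2 ^ 2 - δ) * Ring.inverse (4 * y.1.1), y.2, y.1.1),
        ⟨y.1.2, by
          have := (key y.1.1 y.2 ((y.2 ^ 2 - δ) * Ring.inverse (4 * y.1.1)) y.1.2).mpr rfl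
          linear_combination this⟩⟩
      left_inv := by
        rintro ⟨⟨a, b, c⟩, hc, hd⟩
        refine Subtype.ext ?_
        have hd' : b ^ 2 - 4 * c * a = δ := by linear_combination hd
        exact Prod.ext (((key c b a hc).mp hd').symm) rfl
      right_inv := by rintro ⟨⟨a, ha⟩, b⟩; rfl }
  have eB : ↥(SA ∩ SC) ≃ {a : ZMod (p ^ r) // IsUnit a} × {a : ZMod (p ^ r) // IsUnit a} :=
    { toFun := fun x => (⟨x.1.1, x.2.1.1⟩, ⟨x.1.2.1, by
        -- b is a unit: b^2 = δ + 4ac, a and c units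
        obtain ⟨⟨ha, hd⟩, ⟨hc, -⟩⟩ := x.2
        refine isUnit_of_mul_isUnit_left (y := x.1.2.1) ?_
        rw [← sq]
        refine (unit_iff _).mpr ?_
        intro hdvd
        have hb2 : (p : ZMod (p ^ r)) ∣ 4 * x.1.1 * x.1.2.2 := by
          have he : 4 * x.1.1 * x.1.2.2 = x.1.2.1 ^ 2 - δ := by linear_combination -hd
          rw [he]
          exact dvd_sub hdvd hδ
        exact (unit_iff _).mp ((hu4.mul ha).mul hc) hb2⟩)
      invFun := fun y => ⟨(y.1.1, y.2.1, (y.2.1 ^ 2 - δ) * Ring.inverse (4 * y.1.1)),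
        ⟨⟨y.1.2, (key y.1.1 y.2.1 _ y.1.2).mpr rfl⟩,
         ⟨(hbδ y.2.1 y.2.2).mul (isUnit_ringInverse.mpr (hu4.mul y.1.2)),
          (key y.1.1 y.2.1 _ y.1.2).mpr rfl⟩⟩⟩
      left_inv := by
        rintro ⟨⟨a, b, c⟩, ⟨ha, hd⟩, ⟨hc, -⟩⟩
        exact Subtype.ext (Prod.ext rfl (Prod.ext rfl ((key a b c ha).mp hd).symm))
      right_inv := by rintro ⟨⟨a, ha⟩, ⟨b, hb⟩⟩; rfl }
  have hT : Nat.card {a : ZMod (p ^ r) // IsUnit a} = Nat.totient (p ^ r) := by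
    have e : {a : ZMod (p ^ r) // IsUnit a} ≃ (ZMod (p ^ r))ˣ :=
      { toFun := fun a => a.2.unit
        invFun := fun u => ⟨u, u.isUnit⟩
        left_inv := fun a => Subtype.ext a.2.unit_spec
        right_inv := fun u => Units.ext u.isUnit.unit_spec }
    rw [Nat.card_congr e, Nat.card_eq_fintype_card, ZMod.card_units_eq_totient]
  set t := Nat.totient (p ^ r) with ht
  have hcA : SA.ncard = t * p ^ r := by
    rw [← Nat.card_coe_set_eq, Nat.card_congr eA, Nat.card_prod, hT, Nat.card_zmod]
  have hcC : SC.ncard = t * p ^ r := by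
    rw [← Nat.card_coe_set_eq, Nat.card_congr eC, Nat.card_prod, hT, Nat.card_zmod]
  have hcB : (SA ∩ SC).ncard = t * t := by
    rw [← Nat.card_coe_set_eq, Nat.card_congr eB, Nat.card_prod, hT]
  have hie := Set.ncard_union_add_ncard_inter SA SC
  rw [hcA, hcC, hcB] at hie
  have hgoal : Nat.card {x : M // ¬ ((p : ZMod (p ^ r)) ∣ x.1 ∧ (p : ZMod (p ^ r)) ∣ x.2.1 ∧
      (p : ZMod (p ^ r)) ∣ x.2.2) ∧ x.2.1 ^ 2 - 4 * x.1 * x.2.2 = δ} = (SA ∪ SC).ncard :=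
    (Nat.card_coe_set_eq _).trans (congrArg Set.ncard hset)
  rw [hgoal]
  -- arithmetic finish
  have htv : t = p ^ (r - 1) * (p - 1) := by rw [ht, Nat.totient_prime_pow hp (by omega)]
  obtain ⟨s, rfl⟩ : ∃ s, r = s + 1 := ⟨r - 1, by omega⟩
  obtain ⟨q, rfl⟩ : ∃ q, p = q + 2 := ⟨p - 2, by have := hp.two_le; omega⟩
  have hs1 : s + 1 - 1 = s := by omega
  rw [hs1] at htv
  have h2s : 2 * (s + 1) - 2 = 2 * s := by omega
  rw [h2s]
  have hval : (q + 2) ^ 2 - 1 = q ^ 2 + 4 * q + 3 := by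
    have : (q + 2) ^ 2 = q ^ 2 + 4 * q + 4 := by ring
    omega
  have hq1 : q + 2 - 1 = q + 1 := by omega
  rw [htv, hq1] at hie
  have target : (q + 2) ^ (2 * s) * ((q + 2) ^ 2 - 1) + (q + 2) ^ s * (q + 1) * ((q + 2) ^ s * (q + 1))
      = (q + 2) ^ s * (q + 1) * (q + 2) ^ (s + 1) + (q + 2) ^ s * (q + 1) * (q + 2) ^ (s + 1) := by
    rw [hval, pow_succ, two_mul, pow_add]
    ring
  omega
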